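/- Let G and H be finite simple graphs, each on at least 4 vertices and each prime with respect to modular decomposition, and let G' (respectively H') be obtained from G (respectively H) by adding a new universal vertex adjacent to all other vertices. Then G is isomorphic to H if and only if G' and H' are Seidel complement equivalent. -/

import Mathlib

universe u

/-- The Seidel complement of `G` at `v`: adjacency between the open neighborhood of `v`
and the set of vertices different from `v` and not adjacent to `v` is complemented,
all other adjacencies are unchanged. -/
def seidelCompl {V : Type u} (G : SimpleGraph V) (v : V) : SimpleGraph V where
  Adj x y := x ≠ y ∧
    Xor' (G.Adj x y)
      ((G.Adj v x ∧ ¬ G.Adj v y ∧ y ≠ v) ∨ (G.Adj v y ∧ ¬ G.Adj v x ∧ x ≠ v))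
  symm := by
    constructor
    rintro x y ⟨hxy, h⟩
    refine ⟨hxy.symm, ?_⟩
    have h1 : G.Adj x y ↔ G.Adj y x := G.adj_comm x y
    unfold Xor' at h ⊢
    rw [xor_def] at h ⊢
    tauto
  loopless := ⟨fun x h => h.1 rfl⟩

/-- `M` is a module of `G`: every vertex outside `M` is adjacent either to all
vertices of `M` or to none of them. -/
def IsModule {V : Type u} (G : SimpleGraph V) (M : Set V) : Prop :=
  ∀ z ∉ M, (∀ m ∈ M, G.Adj z m) ∨ (∀ m ∈ M, ¬ G.Adj z m)

/-- `G` is prime w.r.t. modular decomposition: every module is trivial. -/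
def IsPrime {V : Type u} (G : SimpleGraph V) : Prop :=
  ∀ M : Set V, IsModule G M → M = ∅ ∨ (∃ x, M = {x}) ∨ M = Set.univ

/-- `G` and `H` are Seidel complement equivalent: some finite sequence of Seidel
complementations applied to `G` yields a graph isomorphic to `H`. -/
def SeidelEquiv {V W : Type u} (G : SimpleGraph V) (H : SimpleGraph W) : Prop :=
  ∃ l : List V, Nonempty ((l.foldl seidelCompl G) ≃g H)

/-- The graph obtained from `G` by adding a new universal vertex (`none`). -/
def addUniversal {V : Type u} (G : SimpleGraph V) : SimpleGraph (Option V) :=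
  SimpleGraph.fromRel fun x y =>
    x = none ∨ ∃ u w : V, x = some u ∧ y = some w ∧ G.Adj u w

/-! ### Auxiliary lemmas -/

lemma seidel_adj {U : Type u} (K : SimpleGraph U) (v x y : U) :
    (seidelCompl K v).Adj x y ↔ x ≠ y ∧
    Xor' (K.Adj x y)
      ((K.Adj v x ∧ ¬ K.Adj v y ∧ y ≠ v) ∨ (K.Adj v y ∧ ¬ K.Adj v x ∧ x ≠ v)) := Iff.rfl

lemma seidel_adj_base {U : Type u} (K : SimpleGraph U) (v z : U) :
    (seidelCompl K v).Adj v z ↔ K.Adj v z := by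
  have h1 := K.loopless.irrefl v
  have h2 : K.Adj v z → v ≠ z := fun h => h.ne
  simp only [seidel_adj, Xor', xor_def]
  tauto

lemma seidel_self {U : Type u} (K : SimpleGraph U) (v : U) :
    seidelCompl (seidelCompl K v) v = K := by
  ext x y
  have hvx := seidel_adj_base K v x
  have hvy := seidel_adj_base K v y
  have h2 : K.Adj x y → x ≠ y := fun h => h.ne
  simp only [seidel_adj, hvx, hvy, Xor']
  by_cases K.Adj x y <;> by_cases K.Adj v x <;> by_cases K.Adj v y <;>
    by_cases x = y <;> by_cases y = v <;> by_cases x = v <;> simp_all <;> tauto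

set_option maxHeartbeats 1000000 in
lemma seidel_comm {U : Type u} [DecidableEq U] (K : SimpleGraph U) {u b : U} (hub : u ≠ b)
    (x y : U) :
    (seidelCompl K b).Adj (Equiv.swap u b x) (Equiv.swap u b y) ↔
      (seidelCompl (seidelCompl K u) b).Adj x y := by
  have hbu : b ≠ u := hub.symm
  have l1 := K.loopless.irrefl u; have l2 := K.loopless.irrefl b
  have l3 := K.loopless.irrefl x; have l4 := K.loopless.irrefl y
  have c1 : K.Adj b u ↔ K.Adj u b := K.adj_comm b u
  have c2 : K.Adj x u ↔ K.Adj u x := K.adj_comm x u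
  have c3 : K.Adj y u ↔ K.Adj u y := K.adj_comm y u
  have c4 : K.Adj x b ↔ K.Adj b x := K.adj_comm x b
  have c5 : K.Adj y b ↔ K.Adj b y := K.adj_comm y b
  have c6 : K.Adj y x ↔ K.Adj x y := K.adj_comm y x
  rcases eq_or_ne x y with rfl | hxy
  · simp [seidel_adj]
  have hyx : ¬ y = x := fun h => hxy h.symm
  rcases eq_or_ne x u with hxu | hxu
  · rw [hxu, Equiv.swap_apply_left]
    rcases eq_or_ne y b with hyb | hyb
    · rw [hyb, Equiv.swap_apply_right]
      rw [hxu] at hxy; rw [hyb] at hxy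
      simp only [seidel_adj, Xor']
      by_cases a1 : K.Adj u b <;> simp_all
    · have hyu : y ≠ u := by rw [hxu] at hxy; exact fun h => hxy h.symm
      have huy : ¬ u = y := fun h => hyu h.symm
      have hby : ¬ b = y := fun h => hyb h.symm
      rw [Equiv.swap_apply_of_ne_of_ne hyu hyb]
      simp only [seidel_adj, Xor']
      by_cases a1 : K.Adj u b <;> by_cases a2 : K.Adj u y <;> by_cases a3 : K.Adj b y <;>
        simp_all
  rcases eq_or_ne x b with hxb | hxb
  · rw [hxb, Equiv.swap_apply_right]
    rcases eq_or_ne y u with hyu | hyu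
    · rw [hyu, Equiv.swap_apply_left]
      rw [hxb] at hxy hyx; rw [hyu] at hxy hyx
      simp only [seidel_adj, Xor']
      by_cases a1 : K.Adj u b <;> simp_all
    · have hyb : y ≠ b := by rw [hxb] at hxy; exact fun h => hxy h.symm
      have huy : ¬ u = y := fun h => hyu h.symm
      have hby : ¬ b = y := fun h => hyb h.symm
      rw [Equiv.swap_apply_of_ne_of_ne hyu hyb]
      simp only [seidel_adj, Xor']
      by_cases a1 : K.Adj u b <;> by_cases a2 : K.Adj u y <;> by_cases a3 : K.Adj b y <;>
        simp_all
  · have hux : ¬ u = x := fun h => hxu h.symm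
    have hbx : ¬ b = x := fun h => hxb h.symm
    rw [Equiv.swap_apply_of_ne_of_ne hxu hxb]
    rcases eq_or_ne y u with hyu | hyu
    · rw [hyu, Equiv.swap_apply_left]
      rw [hyu] at hxy hyx
      simp only [seidel_adj, Xor']
      by_cases a1 : K.Adj u b <;> by_cases a2 : K.Adj u x <;> by_cases a3 : K.Adj b x <;>
        simp_all
    rcases eq_or_ne y b with hyb | hyb
    · rw [hyb, Equiv.swap_apply_right]
      rw [hyb] at hxy hyx
      have huy : ¬ u = y := fun h => hyu h.symm
      simp only [seidel_adj, Xor']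
      by_cases a1 : K.Adj u b <;> by_cases a2 : K.Adj u x <;> by_cases a3 : K.Adj b x <;>
        simp_all
    · have huy : ¬ u = y := fun h => hyu h.symm
      have hby : ¬ b = y := fun h => hyb h.symm
      rw [Equiv.swap_apply_of_ne_of_ne hyu hyb]
      simp only [seidel_adj, Xor']
      by_cases a1 : K.Adj u b <;> by_cases a2 : K.Adj u x <;> by_cases a3 : K.Adj u y <;>
        by_cases a4 : K.Adj b x <;> by_cases a5 : K.Adj b y <;> by_cases a6 : K.Adj x y <;>
        simp_all

lemma seidel_univ_eq {U : Type u} {K : SimpleGraph U} {c : U}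
    (hc : ∀ x, x ≠ c → K.Adj c x) : seidelCompl K c = K := by
  ext x y
  have h2 : K.Adj x y → x ≠ y := fun h => h.ne
  have hx : ¬ K.Adj c y → ¬ y ≠ c := fun h hy => h (hc y hy)
  have hx2 : ¬ K.Adj c x → ¬ x ≠ c := fun h hy => h (hc x hy)
  simp only [seidel_adj, Xor', xor_def]
  tauto

lemma addUniversal_adj_some {V : Type u} (G : SimpleGraph V) (a b : V) :
    (addUniversal G).Adj (some a) (some b) ↔ G.Adj a b := by
  rw [addUniversal, SimpleGraph.fromRel_adj]
  constructor
  · rintro ⟨hne, h | h⟩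
    · rcases h with h | ⟨p, q, hp, hq, hpq⟩
      · exact absurd h (by simp)
      · cases hp; cases hq; exact hpq
    · rcases h with h | ⟨p, q, hp, hq, hpq⟩
      · exact absurd h (by simp)
      · cases hp; cases hq; exact hpq.symm
  · intro h
    exact ⟨by simpa using h.ne, Or.inl (Or.inr ⟨a, b, rfl, rfl, h⟩)⟩

lemma addUniversal_univ {V : Type u} (G : SimpleGraph V) :
    ∀ x : Option V, x ≠ none → (addUniversal G).Adj none x := by
  intro x hx
  rw [addUniversal, SimpleGraph.fromRel_adj]
  exact ⟨fun h => hx h.symm, Or.inl (Or.inl rfl)⟩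

/-- Seidel complementation commutes with isomorphisms. -/
def isoSeidel {V W : Type u} {G : SimpleGraph V} {H : SimpleGraph W} (e : G ≃g H) (v : V) :
    seidelCompl G v ≃g seidelCompl H (e v) where
  toEquiv := e.toEquiv
  map_rel_iff' := by
    intro x y
    have m : ∀ a b, H.Adj (e a) (e b) ↔ G.Adj a b := fun a b => e.map_adj_iff
    have inj : ∀ a b : V, (e a = e b) ↔ a = b := fun a b => EmbeddingLike.apply_eq_iff_eq e
    show (seidelCompl H (e v)).Adj (e x) (e y) ↔ (seidelCompl G v).Adj x y
    simp only [seidel_adj, ne_eq, m, inj]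

/-- Every graph in the Seidel class of `addUniversal G` is isomorphic to a single
Seidel complement of `addUniversal G`. -/
lemma invariant {V : Type u} (G : SimpleGraph V) (l : List (Option V)) :
    ∀ (K : SimpleGraph (Option V)) (z : Option V),
      Nonempty (K ≃g seidelCompl (addUniversal G) z) →
      ∃ z', Nonempty (l.foldl seidelCompl K ≃g seidelCompl (addUniversal G) z') := by
  induction l with
  | nil => exact fun K z h => ⟨z, h⟩
  | cons v t ih =>
    rintro K z ⟨e⟩
    simp only [List.foldl_cons]
    have e1 : seidelCompl K v ≃g seidelCompl (seidelCompl (addUniversal G) z) (e v) :=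
      isoSeidel e v
    have key : ∃ z'', Nonempty
        (seidelCompl (seidelCompl (addUniversal G) z) (e v) ≃g
          seidelCompl (addUniversal G) z'') := by
      match z with
      | none =>
        refine ⟨e v, ⟨?_⟩⟩
        generalize e v = y
        rw [seidel_univ_eq (addUniversal_univ G)]
      | some u =>
        by_cases h : e v = some u
        · refine ⟨none, ⟨?_⟩⟩
          rw [h, seidel_self, seidel_univ_eq (addUniversal_univ G)]
        · letI := Classical.decEq (Option V)
          exact ⟨e v, ⟨⟨Equiv.swap (some u) (e v),
            fun {x y} => seidel_comm (addUniversal G) (Ne.symm h) x y⟩⟩⟩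
    obtain ⟨z'', ⟨e2⟩⟩ := key
    exact ih (seidelCompl K v) z'' ⟨e1.trans e2⟩

lemma exists_two {V : Type u} [Fintype V] (h : 3 ≤ Fintype.card V) (u : V) :
    ∃ a b : V, a ≠ b ∧ a ≠ u ∧ b ≠ u := by
  classical
  have h2 : 1 < (Finset.univ.erase u).card := by
    rw [Finset.card_erase_of_mem (Finset.mem_univ u), Finset.card_univ]
    omega
  obtain ⟨a, ha, b, hb, hab⟩ := Finset.one_lt_card.mp h2
  exact ⟨a, b, hab, (Finset.mem_erase.mp ha).1, (Finset.mem_erase.mp hb).1⟩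

lemma prime_no_universal {V : Type u} [Fintype V] {G : SimpleGraph V}
    (hV : 3 ≤ Fintype.card V) (hG : IsPrime G) (u : V)
    (hu : ∀ x, x ≠ u → G.Adj u x) : False := by
  obtain ⟨a, b, hab, hau, hbu⟩ := exists_two hV u
  have hM : IsModule G {v | v ≠ u} := by
    intro z hz
    have hz' : z = u := by simpa using hz
    subst hz'
    exact Or.inl fun m hm => hu m hm
  rcases hG _ hM with h | ⟨x, h⟩ | h
  · exact absurd (show a ∈ ({v | v ≠ u} : Set V) from hau) (by rw [h]; simp)
  · have ha : a ∈ ({v | v ≠ u} : Set V) := hau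
    have hb : b ∈ ({v | v ≠ u} : Set V) := hbu
    rw [h] at ha hb
    exact hab (ha.trans hb.symm)
  · have : u ∈ ({v | v ≠ u} : Set V) := by rw [h]; trivial
    exact this rfl

lemma prime_no_pair_module {V : Type u} [Fintype V] {G : SimpleGraph V}
    (hV : 3 ≤ Fintype.card V) (hG : IsPrime G) {u w : V} (huw : u ≠ w)
    (h : ∀ t, t ≠ u → t ≠ w → (G.Adj u t ↔ G.Adj w t)) : False := by
  have hM : IsModule G {u, w} := by
    intro z hz
    have hzu : z ≠ u := fun e => hz (by rw [e]; exact Set.mem_insert u {w})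
    have hzw : z ≠ w := fun e => hz (by rw [e]; exact Set.mem_insert_of_mem u rfl)
    by_cases ha : G.Adj z u
    · left
      intro m hm
      rcases hm with rfl | rfl
      · exact ha
      · have : G.Adj u z := ha.symm
        have := (h z hzu hzw).mp this
        exact this.symm
    · right
      intro m hm
      rcases hm with rfl | rfl
      · exact ha
      · intro hc
        exact ha (((h z hzu hzw).mpr hc.symm).symm)
  rcases hG _ hM with h' | ⟨x, h'⟩ | h'
  · have : u ∈ ({u, w} : Set V) := Set.mem_insert u {w}
    rw [h'] at this
    exact this
  · have h1 : u ∈ ({u, w} : Set V) := Set.mem_insert u {w}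
    have h2 : w ∈ ({u, w} : Set V) := Set.mem_insert_of_mem u rfl
    rw [h'] at h1 h2
    exact huw (h1.trans h2.symm)
  · obtain ⟨a, b, hab, hau, hbu⟩ := exists_two hV u
    have key : ∃ t : V, t ≠ u ∧ t ≠ w := by
      by_cases haw : a = w
      · exact ⟨b, hbu, fun hb => hab (by rw [haw, hb])⟩
      · exact ⟨a, hau, haw⟩
    obtain ⟨t, htu, htw⟩ := key
    have : t ∈ ({u, w} : Set V) := by rw [h']; trivial
    rcases this with rfl | rfl
    · exact htu rfl
    · exact htw rfl

lemma univ_map {V W : Type u} {A : SimpleGraph V} {B : SimpleGraph W} (f : A ≃g B) (x : V)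
    (hx : ∀ y, y ≠ x → A.Adj x y) : ∀ z, z ≠ f x → B.Adj (f x) z := by
  intro z hz
  have hzz : z = f (f.symm z) := (f.apply_symm_apply z).symm
  rw [hzz, f.map_adj_iff]
  apply hx
  intro h
  apply hz
  rw [hzz, h]

lemma no_universal_seidel {V : Type u} [Fintype V] {G : SimpleGraph V}
    (hV : 3 ≤ Fintype.card V) (hG : IsPrime G) (u : V) (x : Option V)
    (hx : ∀ y, y ≠ x → (seidelCompl (addUniversal G) (some u)).Adj x y) : False := by
  have g1 : ∀ a : V, (addUniversal G).Adj none (some a) :=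
    fun a => addUniversal_univ G (some a) (by simp)
  have g2 : ∀ a : V, (addUniversal G).Adj (some a) none := fun a => (g1 a).symm
  have g3 : ∀ a b : V, (addUniversal G).Adj (some a) (some b) ↔ G.Adj a b :=
    addUniversal_adj_some G
  -- first, a computation of T.Adj none (some t) for t ≠ u
  have hnone : ∀ t : V, t ≠ u →
      ((seidelCompl (addUniversal G) (some u)).Adj none (some t) ↔ G.Adj u t) := by
    intro t htu
    rw [seidel_adj]
    have e1 := g1 t
    have e2 := g2 u
    have e3 : (some t : Option V) ≠ some u := by simpa using htu
    have e6 : (none : Option V) ≠ some t := by simp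
    simp only [Xor', xor_def, g3]
    tauto
  match x with
  | none =>
    refine prime_no_universal hV hG u fun t htu => ?_
    exact (hnone t htu).mp (hx (some t) (by simp))
  | some w =>
    by_cases hwu : w = u
    · subst hwu
      refine prime_no_universal hV hG w fun t htw => ?_
      have h9 := hx (some t) (by simpa using htw)
      rw [seidel_adj_base, g3] at h9
      exact h9
    · -- w ≠ u : derive G.Adj u w, then that {u, w} is a module
      have haduw : G.Adj u w := by
        have h0 := hx none (by simp)
        have h1 : (seidelCompl (addUniversal G) (some u)).Adj none (some w) := h0.symm
        exact (hnone w hwu).mp h1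
      refine prime_no_pair_module hV hG (Ne.symm hwu : u ≠ w) fun t htu htw => ?_
      have h9 := hx (some t) (by simpa using htw)
      rw [seidel_adj] at h9
      have e3 : (some t : Option V) ≠ some u := by simpa using htu
      have e7 : (some w : Option V) ≠ some u := by simpa using hwu
      simp only [Xor', xor_def, g3] at h9
      tauto

/-- Adding a universal vertex is functorial for isomorphisms. -/
def addUniversalIso {V W : Type u} {G : SimpleGraph V} {H : SimpleGraph W} (f : G ≃g H) :
    addUniversal G ≃g addUniversal H where
  toEquiv := Equiv.optionCongr f.toEquiv
  map_rel_iff' := by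
    intro x y
    cases x with
    | none =>
      cases y with
      | none => simp [SimpleGraph.irrefl]
      | some b =>
        show (addUniversal H).Adj none (some (f b)) ↔ (addUniversal G).Adj none (some b)
        constructor
        · intro _; exact addUniversal_univ G _ (by simp)
        · intro _; exact addUniversal_univ H _ (by simp)
    | some a =>
      cases y with
      | none =>
        show (addUniversal H).Adj (some (f a)) none ↔ (addUniversal G).Adj (some a) none
        constructor
        · intro _; exact (addUniversal_univ G _ (by simp)).symm
        · intro _; exact (addUniversal_univ H _ (by simp)).symm
      | some b =>
        show (addUniversal H).Adj (some (f a)) (some (f b)) ↔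
          (addUniversal G).Adj (some a) (some b)
        rw [addUniversal_adj_some, addUniversal_adj_some, f.map_adj_iff]

/-- For prime graphs `G, H` on at least 4 vertices, `G ≅ H` iff the graphs obtained by
adding a universal vertex to each are Seidel complement equivalent. -/
theorem iso_iff_seidelEquiv_addUniversal {V W : Type u} [Fintype V] [Fintype W]
    (G : SimpleGraph V) (H : SimpleGraph W)
    (hV : 4 ≤ Fintype.card V) (hW : 4 ≤ Fintype.card W)
    (hG : IsPrime G) (hH : IsPrime H) :
    Nonempty (G ≃g H) ↔ SeidelEquiv (addUniversal G) (addUniversal H) := by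
  have hV3 : 3 ≤ Fintype.card V := by omega
  have hW3 : 3 ≤ Fintype.card W := by omega
  constructor
  · rintro ⟨f⟩
    exact ⟨[], ⟨addUniversalIso f⟩⟩
  · rintro ⟨l, ⟨e⟩⟩
    have h0 : seidelCompl (addUniversal G) none = addUniversal G :=
      seidel_univ_eq (addUniversal_univ G)
    obtain ⟨z', ⟨e2⟩⟩ := invariant G l (addUniversal G) none ⟨by rw [h0]⟩
    have f : seidelCompl (addUniversal G) z' ≃g addUniversal H := e2.symm.trans e
    match z' with
    | some u =>
      exfalso
      have huniv : ∀ y, y ≠ f.symm none →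
          (seidelCompl (addUniversal G) (some u)).Adj (f.symm none) y :=
        univ_map f.symm none (addUniversal_univ H)
      exact no_universal_seidel hV3 hG u (f.symm none) huniv
    | none =>
      rw [h0] at f
      -- f none is universal in addUniversal H
      have hfu : ∀ z, z ≠ f none → (addUniversal H).Adj (f none) z :=
        univ_map f none (addUniversal_univ G)
      have hfn : f none = none := by
        rcases hfn : f none with _ | w
        · rfl
        · exfalso
          refine prime_no_universal hW3 hH w fun t htw => ?_
          have h9 := hfu (some t) (by rw [hfn]; simpa using htw)
          rw [hfn, addUniversal_adj_some] at h9
          exact h9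
      -- build the isomorphism G ≃g H
      have hsome : ∀ a : V, ∃ b : W, f.toEquiv (some a) = some b := by
        intro a
        rcases hb : f.toEquiv (some a) with _ | b
        · exfalso
          have : f.toEquiv (some a) = f.toEquiv none := by
            rw [hb]
            exact hfn.symm
          simpa using f.toEquiv.injective this
        · exact ⟨b, rfl⟩
      have hg : ∀ a : V, some (Equiv.removeNone f.toEquiv a) = f.toEquiv (some a) :=
        fun a => Equiv.removeNone_some f.toEquiv (hsome a)
      refine ⟨⟨Equiv.removeNone f.toEquiv, ?_⟩⟩
      intro a b
      show H.Adj (Equiv.removeNone f.toEquiv a) (Equiv.removeNone f.toEquiv b) ↔ G.Adj a b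
      rw [← addUniversal_adj_some H, hg a, hg b]
      have : ∀ p q : Option V, (addUniversal H).Adj (f.toEquiv p) (f.toEquiv q) ↔
          (addUniversal G).Adj p q := fun p q => f.map_adj_iff
      rw [this, addUniversal_adj_some]
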